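/- Fano's inequality with N = 1 pair of distributions and a random variable (lower bound on the expectation under the alternative): let P and Q be probability measures on a common measurable space (Ω, F) with KL(P,Q) finite, and let Z : Ω → [0,1] be measurable with E_P[Z] > 0. Then E_Q[Z] ≥ exp( − (KL(P,Q) + log 2) / E_P[Z] ). -/

import Mathlib

open MeasureTheory
open scoped ENNReal Classical

/-- The Kullback-Leibler divergence between two measures, with value `+∞`
when `P` is not absolutely continuous w.r.t. `Q` or when the log-likelihood
ratio is not integrable. -/
noncomputable def KLdiv {Ω : Type*} [MeasurableSpace Ω] (P Q : Measure Ω) : ℝ≥0∞ :=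
  if P ≪ Q ∧ Integrable (fun ω => Real.log (P.rnDeriv Q ω).toReal) P
  then ENNReal.ofReal (∫ ω, Real.log (P.rnDeriv Q ω).toReal ∂P)
  else ⊤

/-- Fano's inequality with a single pair of distributions and a `[0,1]`-valued
random variable: `E_Q[Z] ≥ exp(−(KL(P,Q) + log 2)/E_P[Z])`. -/
theorem fano_single_pair {Ω : Type*} [MeasurableSpace Ω]
    (P Q : Measure Ω) [IsProbabilityMeasure P] [IsProbabilityMeasure Q]
    (hKL : KLdiv P Q ≠ ⊤)
    (Z : Ω → ℝ) (hZmeas : Measurable Z) (hZ01 : ∀ ω, Z ω ∈ Set.Icc (0 : ℝ) 1)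
    (hEP : 0 < ∫ ω, Z ω ∂P) :
    (∫ ω, Z ω ∂Q) ≥
      Real.exp (-(((KLdiv P Q).toReal + Real.log 2) / ∫ ω, Z ω ∂P)) := by
  classical
  by_cases h : P ≪ Q ∧ Integrable (fun ω => Real.log (P.rnDeriv Q ω).toReal) P
  swap
  · exact absurd (by simp [KLdiv, h]) hKL
  obtain ⟨hPQ, hint'⟩ := h
  have hint : Integrable (llr P Q) P := hint'
  set p := ∫ ω, Z ω ∂P with hp
  set q := ∫ ω, Z ω ∂Q with hq
  have hZnorm : ∀ ω, ‖Z ω‖ ≤ 1 := fun ω => by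
    rw [Real.norm_eq_abs, abs_le]
    exact ⟨by linarith [(hZ01 ω).1], (hZ01 ω).2⟩
  have hZP : Integrable Z P :=
    (integrable_const (1 : ℝ)).mono' hZmeas.aestronglyMeasurable (ae_of_all _ hZnorm)
  have hZQ : Integrable Z Q :=
    (integrable_const (1 : ℝ)).mono' hZmeas.aestronglyMeasurable (ae_of_all _ hZnorm)
  have hq0 : 0 ≤ q := integral_nonneg fun ω => (hZ01 ω).1
  have hq1 : q ≤ 1 := by
    calc q ≤ ∫ _ω, (1 : ℝ) ∂Q := integral_mono hZQ (integrable_const 1) fun ω => (hZ01 ω).2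
    _ = 1 := by simp
  have hqpos : 0 < q := by
    rcases hq0.eq_or_lt with h0 | h0
    · exfalso
      have hZ0 : Z =ᵐ[Q] 0 :=
        (integral_eq_zero_iff_of_nonneg (fun ω => (hZ01 ω).1) hZQ).mp h0.symm
      have hZ0P : Z =ᵐ[P] 0 := hPQ.ae_le hZ0
      have : p = 0 := by
        rw [hp, integral_congr_ae hZ0P]; simp
      rw [hp] at hEP
      linarith
    · exact h0
  set lam : ℝ := -Real.log q with hlam
  have hlam0 : 0 ≤ lam := by
    have := Real.log_nonpos hq0 hq1
    simp only [hlam]; linarith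
  have hexplam : Real.exp lam = q⁻¹ := by
    rw [hlam, Real.exp_neg, Real.exp_log hqpos]
  -- integrability of exp (lam * Z)
  have hmeas_exp : Measurable fun ω => Real.exp (lam * Z ω) := (hZmeas.const_mul lam).exp
  have hexp_bound : ∀ ω, Real.exp (lam * Z ω) ≤ Real.exp lam := fun ω => by
    apply Real.exp_le_exp.mpr
    calc lam * Z ω ≤ lam * 1 := by
          apply mul_le_mul_of_nonneg_left (hZ01 ω).2 hlam0
    _ = lam := mul_one lam
  have hexp_int_Q : Integrable (fun ω => Real.exp (lam * Z ω)) Q := by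
    refine (integrable_const (Real.exp lam)).mono' hmeas_exp.aestronglyMeasurable
      (ae_of_all _ fun ω => ?_)
    rw [Real.norm_eq_abs, abs_of_pos (Real.exp_pos _)]
    exact hexp_bound ω
  have hf_int_P : Integrable (fun ω => lam * Z ω) P := hZP.const_mul lam
  -- the tilted measure
  haveI : NeZero Q := ⟨IsProbabilityMeasure.ne_zero Q⟩
  set ν : Measure Ω := Q.tilted (fun ω => lam * Z ω) with hν
  haveI : IsProbabilityMeasure ν := isProbabilityMeasure_tilted hexp_int_Q
  have hQν : Q ≪ ν := absolutelyContinuous_tilted hexp_int_Q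
  have hPν : P ≪ ν := hPQ.trans hQν
  have h_int_llr_ν : Integrable (llr P ν) P :=
    integrable_llr_tilted_right hPQ hf_int_P hint hexp_int_Q
  have h_eq : ∫ ω, llr P ν ω ∂P
      = ∫ ω, llr P Q ω ∂P - ∫ ω, lam * Z ω ∂P + Real.log (∫ ω, Real.exp (lam * Z ω) ∂Q) :=
    integral_llr_tilted_right hPQ hf_int_P hexp_int_Q hint
  -- nonnegativity of ∫ llr P ν ∂P
  have h_int2 : Integrable (llr ν P) P := (h_int_llr_ν.neg.congr (neg_llr hPν))
  have h_neg : ∫ ω, llr ν P ω ∂P = - ∫ ω, llr P ν ω ∂P := by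
    rw [← integral_neg]
    exact integral_congr_ae (neg_llr hPν).symm
  have h_le : ∫ ω, llr ν P ω ∂P ≤ 0 := by
    have h_int3 : Integrable (fun ω => (ν.rnDeriv P ω).toReal - 1) P :=
      Measure.integrable_toReal_rnDeriv.sub (integrable_const 1)
    have hle2 : ∫ ω, (ν.rnDeriv P ω).toReal ∂P ≤ 1 := by
      have h4 := Measure.setIntegral_toReal_rnDeriv_le (μ := ν) (ν := P) (s := Set.univ)
        (measure_ne_top ν _)
      rw [setIntegral_univ] at h4
      simpa using h4
    calc ∫ ω, llr ν P ω ∂P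
        ≤ ∫ ω, ((ν.rnDeriv P ω).toReal - 1) ∂P := by
          refine integral_mono_ae h_int2 h_int3 ?_
          filter_upwards [Measure.rnDeriv_pos' hPν, Measure.rnDeriv_lt_top ν P] with ω h1 h2
          exact Real.log_le_sub_one_of_pos (ENNReal.toReal_pos h1.ne' h2.ne)
      _ = (∫ ω, (ν.rnDeriv P ω).toReal ∂P) - 1 := by
          rw [integral_sub Measure.integrable_toReal_rnDeriv (integrable_const 1)]; simp
      _ ≤ 0 := by linarith
  have h_nonneg : 0 ≤ ∫ ω, llr P ν ω ∂P := by linarith [h_neg ▸ h_le]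
  -- Donsker-Varadhan type bound
  have hfP : ∫ ω, lam * Z ω ∂P = lam * p := by rw [integral_const_mul]
  have hc_pos : 0 < ∫ ω, Real.exp (lam * Z ω) ∂Q := integral_exp_pos hexp_int_Q
  have hexp_pt : ∀ ω, Real.exp (lam * Z ω) ≤ 1 + Z ω * (Real.exp lam - 1) := fun ω => by
    have h5 := convexOn_exp.2 (Set.mem_univ (0 : ℝ)) (Set.mem_univ lam)
      (by linarith [(hZ01 ω).2] : (0:ℝ) ≤ 1 - Z ω) (hZ01 ω).1 (by ring)
    simp only [smul_eq_mul, mul_zero, zero_add, Real.exp_zero] at h5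
    calc Real.exp (lam * Z ω) = Real.exp (Z ω * lam) := by rw [mul_comm]
    _ ≤ (1 - Z ω) * 1 + Z ω * Real.exp lam := h5
    _ = 1 + Z ω * (Real.exp lam - 1) := by ring
  have hc_le : ∫ ω, Real.exp (lam * Z ω) ∂Q ≤ 2 := by
    calc ∫ ω, Real.exp (lam * Z ω) ∂Q
        ≤ ∫ ω, (1 + Z ω * (Real.exp lam - 1)) ∂Q :=
          integral_mono hexp_int_Q ((integrable_const 1).add (hZQ.mul_const _)) hexp_pt
      _ = 1 + q * (Real.exp lam - 1) := by
          rw [integral_add (integrable_const 1) (hZQ.mul_const _), integral_mul_const]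
          simp [hq]
      _ = 2 - q := by
          rw [hexplam, mul_sub, mul_inv_cancel₀ hqpos.ne']; ring
      _ ≤ 2 := by linarith
  have hlog_c : Real.log (∫ ω, Real.exp (lam * Z ω) ∂Q) ≤ Real.log 2 :=
    Real.log_le_log hc_pos hc_le
  have hI_le : ∫ ω, llr P Q ω ∂P ≤ (KLdiv P Q).toReal := by
    rw [KLdiv, if_pos ⟨hPQ, hint'⟩, ENNReal.toReal_ofReal']
    exact le_max_left _ _
  have hmain : lam * p ≤ (KLdiv P Q).toReal + Real.log 2 := by
    have : lam * p ≤ ∫ ω, llr P Q ω ∂P + Real.log (∫ ω, Real.exp (lam * Z ω) ∂Q) := by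
      rw [hfP] at h_eq; linarith
    linarith
  -- conclude
  have hdiv : -Real.log q ≤ ((KLdiv P Q).toReal + Real.log 2) / p :=
    (le_div_iff₀ hEP).mpr hmain
  have hfinal : Real.exp (-(((KLdiv P Q).toReal + Real.log 2) / p)) ≤ Real.exp (Real.log q) :=
    Real.exp_le_exp.mpr (by linarith)
  rw [Real.exp_log hqpos] at hfinal
  exact hfinal
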